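/- arXiv:2407.01763 — 3 statements merged into one kernel-verified Lean document; each statement's English description precedes it below -/
import Mathlib

section
/- Fix an integer K ≥ 1, vectors φ_1, …, φ_L ∈ ℝ^K, and nonnegative reals I_1, …, I_L. Then the negative log-Whittle likelihood L(Y) = Σ_{ℓ=1}^{L} ( I_ℓ · exp(−⟨φ_ℓ, Y⟩) + ⟨φ_ℓ, Y⟩ ) is a convex function on ℝ^K. If moreover I_ℓ > 0 for every ℓ and the vectors φ_1, …, φ_L span ℝ^K, then L is strictly convex on ℝ^K. -/
open Real

private lemma whittle_key (c x y a b : ℝ) (hc : 0 ≤ c) (ha : 0 ≤ a) (hb : 0 ≤ b)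
    (hab : a + b = 1) :
    c * Real.exp (-(a * x + b * y)) + (a * x + b * y)
      ≤ a * (c * Real.exp (-x) + x) + b * (c * Real.exp (-y) + y) := by
  have h := convexOn_exp.2 (Set.mem_univ (-x)) (Set.mem_univ (-y)) ha hb hab
  simp only [smul_eq_mul] at h
  have he : a * -x + b * -y = -(a * x + b * y) := by ring
  rw [he] at h
  nlinarith [Real.exp_pos (-(a * x + b * y))]

private lemma whittle_key_strict (c x y a b : ℝ) (hc : 0 < c) (hxy : x ≠ y)
    (ha : 0 < a) (hb : 0 < b) (hab : a + b = 1) :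
    c * Real.exp (-(a * x + b * y)) + (a * x + b * y)
      < a * (c * Real.exp (-x) + x) + b * (c * Real.exp (-y) + y) := by
  have hne : (-x : ℝ) ≠ -y := fun h => hxy (by linarith [neg_injective h])
  have h := strictConvexOn_exp.2 (Set.mem_univ (-x)) (Set.mem_univ (-y)) hne ha hb hab
  simp only [smul_eq_mul] at h
  have he : a * -x + b * -y = -(a * x + b * y) := by ring
  rw [he] at h
  nlinarith [Real.exp_pos (-(a * x + b * y))]

/-- The negative log-Whittle likelihood is convex on `ℝ^K`; if moreover all periodogram
ordinates are strictly positive and the basis vectors `φ_ℓ` span `ℝ^K`, it is strictly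
convex. -/
theorem whittle_likelihood_convex (K L : ℕ) (hK : 1 ≤ K)
    (φ : Fin L → EuclideanSpace ℝ (Fin K)) (I : Fin L → ℝ) (hI : ∀ ℓ, 0 ≤ I ℓ)
    (F : EuclideanSpace ℝ (Fin K) → ℝ)
    (hF : ∀ Y : EuclideanSpace ℝ (Fin K),
      F Y = ∑ ℓ : Fin L, (I ℓ * Real.exp (-(inner ℝ (φ ℓ) Y : ℝ)) + (inner ℝ (φ ℓ) Y : ℝ))) :
    ConvexOn ℝ Set.univ F ∧
    ((∀ ℓ, 0 < I ℓ) → Submodule.span ℝ (Set.range φ) = ⊤ →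
      StrictConvexOn ℝ Set.univ F) := by
  have hin : ∀ (ℓ : Fin L) (p q : EuclideanSpace ℝ (Fin K)) (a b : ℝ),
      (inner ℝ (φ ℓ) (a • p + b • q) : ℝ) = a * inner ℝ (φ ℓ) p + b * inner ℝ (φ ℓ) q := by
    intro ℓ p q a b
    rw [inner_add_right, real_inner_smul_right, real_inner_smul_right]
  constructor
  · refine ⟨convex_univ, ?_⟩
    intro p _ q _ a b ha hb hab
    rw [hF, hF, hF, smul_eq_mul, smul_eq_mul, Finset.mul_sum, Finset.mul_sum,
      ← Finset.sum_add_distrib]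
    apply Finset.sum_le_sum
    intro ℓ _
    rw [hin ℓ p q a b]
    exact whittle_key (I ℓ) _ _ a b (hI ℓ) ha hb hab
  · intro hIpos hspan
    refine ⟨convex_univ, ?_⟩
    intro p _ q _ hpq a b ha hb hab
    have hex : ∃ ℓ, (inner ℝ (φ ℓ) p : ℝ) ≠ inner ℝ (φ ℓ) q := by
      by_contra h
      push_neg at h
      apply hpq
      have hmem : Submodule.span ℝ (Set.range φ) ≤ (ℝ ∙ (p - q))ᗮ := by
        rw [Submodule.span_le]
        rintro _ ⟨ℓ, rfl⟩
        rw [SetLike.mem_coe, Submodule.mem_orthogonal_singleton_iff_inner_right,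
          inner_sub_left, real_inner_comm (φ ℓ) p, real_inner_comm (φ ℓ) q, h ℓ, sub_self]
      rw [hspan, top_le_iff] at hmem
      have hpq2 : p - q ∈ (ℝ ∙ (p - q))ᗮ := hmem ▸ Submodule.mem_top
      have h0 : (inner ℝ (p - q) (p - q) : ℝ) = 0 :=
        hpq2 (p - q) (Submodule.mem_span_singleton_self _)
      rw [inner_self_eq_zero, sub_eq_zero] at h0
      exact h0
    rw [hF, hF, hF, smul_eq_mul, smul_eq_mul, Finset.mul_sum, Finset.mul_sum,
      ← Finset.sum_add_distrib]
    apply Finset.sum_lt_sum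
    · intro ℓ _
      rw [hin ℓ p q a b]
      exact whittle_key (I ℓ) _ _ a b (hI ℓ) ha.le hb.le hab
    · obtain ⟨ℓ0, h0⟩ := hex
      refine ⟨ℓ0, Finset.mem_univ _, ?_⟩
      rw [hin ℓ0 p q a b]
      exact whittle_key_strict (I ℓ0) _ _ a b (hIpos ℓ0) h0 ha hb hab
end

section
/- Fix an integer K ≥ 1, vectors φ_1, …, φ_L ∈ ℝ^K spanning ℝ^K, and strictly positive reals I_1, …, I_L. Then the negative log-Whittle likelihood L(Y) = Σ_{ℓ=1}^{L} ( I_ℓ · exp(−⟨φ_ℓ, Y⟩) + ⟨φ_ℓ, Y⟩ ) is coercive (L(Y) → ∞ as ‖Y‖ → ∞) and attains its infimum at a unique point Y* ∈ ℝ^K; i.e., the Whittle likelihood estimate of the truncated cepstral coefficient vector exists and is unique. -/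
open Real Filter

private lemma whittle_term_lb (c t : ℝ) (hc : 0 < c) :
    |t| / 2 - 3 / c ≤ c * Real.exp (-t) + t := by
  rcases le_or_gt 0 t with ht | ht
  · rw [abs_of_nonneg ht]
    have h1 : 0 < c * Real.exp (-t) := mul_pos hc (Real.exp_pos _)
    have h2 : 0 < 3 / c := by positivity
    linarith
  · rw [abs_of_neg ht]
    have h2 : (-t) / 2 + 1 ≤ Real.exp ((-t) / 2) := Real.add_one_le_exp _
    have h3 : Real.exp (-t) = Real.exp ((-t) / 2) * Real.exp ((-t) / 2) := by
      rw [← Real.exp_add]; ring_nf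
    have h4 : (-t) ^ 2 / 4 ≤ Real.exp (-t) := by
      nlinarith [Real.exp_pos ((-t) / 2)]
    have h5 : 0 ≤ (c * (-t) - 3) ^ 2 := sq_nonneg _
    have h6 : (3 / c) * c = 3 := div_mul_cancel₀ 3 (ne_of_gt hc)
    have h7 : c * ((-t) ^ 2 / 4) ≤ c * Real.exp (-t) :=
      mul_le_mul_of_nonneg_left h4 hc.le
    nlinarith [mul_pos hc hc]

private lemma exp_midpoint_le (x y : ℝ) :
    Real.exp ((x + y) / 2) ≤ (Real.exp x + Real.exp y) / 2 := by
  have h := convexOn_exp.2 (Set.mem_univ x) (Set.mem_univ y)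
    (by norm_num : (0:ℝ) ≤ 1/2) (by norm_num : (0:ℝ) ≤ 1/2) (by norm_num)
  simp only [smul_eq_mul] at h
  calc Real.exp ((x + y) / 2) = Real.exp (1/2 * x + 1/2 * y) := by ring_nf
    _ ≤ 1/2 * Real.exp x + 1/2 * Real.exp y := h
    _ = (Real.exp x + Real.exp y) / 2 := by ring

private lemma exp_midpoint_lt (x y : ℝ) (hxy : x ≠ y) :
    Real.exp ((x + y) / 2) < (Real.exp x + Real.exp y) / 2 := by
  have h := strictConvexOn_exp.2 (Set.mem_univ x) (Set.mem_univ y) hxy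
    (by norm_num : (0:ℝ) < 1/2) (by norm_num : (0:ℝ) < 1/2) (by norm_num)
  simp only [smul_eq_mul] at h
  calc Real.exp ((x + y) / 2) = Real.exp (1/2 * x + 1/2 * y) := by ring_nf
    _ < 1/2 * Real.exp x + 1/2 * Real.exp y := h
    _ = (Real.exp x + Real.exp y) / 2 := by ring

/-- Existence and uniqueness of the Whittle likelihood estimate: if the periodogram
ordinates are strictly positive and the basis vectors span `ℝ^K`, the negative
log-Whittle likelihood is coercive (`L(Y) → ∞` as `‖Y‖ → ∞`) and attains its infimum at a
unique point. -/
theorem whittle_likelihood_unique_minimizer (K L : ℕ) (hK : 1 ≤ K)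
    (φ : Fin L → EuclideanSpace ℝ (Fin K))
    (hspan : Submodule.span ℝ (Set.range φ) = ⊤)
    (I : Fin L → ℝ) (hI : ∀ ℓ, 0 < I ℓ)
    (F : EuclideanSpace ℝ (Fin K) → ℝ)
    (hF : ∀ Y : EuclideanSpace ℝ (Fin K),
      F Y = ∑ ℓ : Fin L, (I ℓ * Real.exp (-(inner ℝ (φ ℓ) Y : ℝ)) + (inner ℝ (φ ℓ) Y : ℝ))) :
    Filter.Tendsto F (Filter.comap (fun Y : EuclideanSpace ℝ (Fin K) => ‖Y‖) Filter.atTop)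
      Filter.atTop ∧
    ∃! Ystar : EuclideanSpace ℝ (Fin K), ∀ Y : EuclideanSpace ℝ (Fin K), F Ystar ≤ F Y := by
  classical
  -- the linear map collecting the inner products
  let T : EuclideanSpace ℝ (Fin K) →ₗ[ℝ] (Fin L → ℝ) :=
    { toFun := fun Y ℓ => (inner ℝ (φ ℓ) Y : ℝ)
      map_add' := fun x y => by funext ℓ; simp [inner_add_right]
      map_smul' := fun c x => by funext ℓ; simp [inner_smul_right] }
  have hTapply : ∀ Y ℓ, T Y ℓ = (inner ℝ (φ ℓ) Y : ℝ) := fun _ _ => rfl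
  have hTinj : Function.Injective T := by
    rw [← LinearMap.ker_eq_bot, eq_bot_iff]
    intro Y hY
    have hY0 : ∀ ℓ, (inner ℝ (φ ℓ) Y : ℝ) = 0 := fun ℓ => congrFun hY ℓ
    have hmem : Y ∈ (Submodule.span ℝ (Set.range φ))ᗮ := by
      rw [Submodule.mem_orthogonal]
      intro u hu
      induction hu using Submodule.span_induction with
      | mem v hv => obtain ⟨ℓ, rfl⟩ := hv; exact hY0 ℓ
      | zero => simp
      | add u v _ _ hu hv => simp [inner_add_left, hu, hv]
      | smul c u _ hu => simp [inner_smul_left, hu]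
    rw [hspan, Submodule.top_orthogonal_eq_bot] at hmem
    simpa using hmem
  -- antilipschitz bound via the inverse on the range
  let e : EuclideanSpace ℝ (Fin K) ≃ₗ[ℝ] LinearMap.range T :=
    LinearEquiv.ofInjective T hTinj
  let S : LinearMap.range T →L[ℝ] EuclideanSpace ℝ (Fin K) :=
    LinearMap.toContinuousLinearMap e.symm.toLinearMap
  set C : ℝ := ‖S‖ + 1 with hCdef
  have hC : 0 < C := by positivity
  have hbound : ∀ Y : EuclideanSpace ℝ (Fin K), ‖Y‖ ≤ C * ‖T Y‖ := by
    intro Y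
    have h2 : S ⟨T Y, LinearMap.mem_range_self T Y⟩ = Y := by
      have : (⟨T Y, LinearMap.mem_range_self T Y⟩ : LinearMap.range T) = e Y := by
        apply Subtype.ext
        simp [e, LinearEquiv.ofInjective_apply]
      simp [S, this, e]
    have h1 := S.le_opNorm ⟨T Y, LinearMap.mem_range_self T Y⟩
    rw [h2] at h1
    have h3 : ‖(⟨T Y, LinearMap.mem_range_self T Y⟩ : LinearMap.range T)‖ = ‖T Y‖ := rfl
    rw [h3] at h1
    have h4 : ‖S‖ * ‖T Y‖ ≤ C * ‖T Y‖ :=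
      mul_le_mul_of_nonneg_right (by simp [hCdef]) (norm_nonneg _)
    linarith
  set D : ℝ := ∑ ℓ : Fin L, 3 / I ℓ with hDdef
  -- lower bound for F
  have key : ∀ Y : EuclideanSpace ℝ (Fin K), ‖Y‖ / (2 * C) - D ≤ F Y := by
    intro Y
    rw [hF]
    have h1 : ∀ ℓ ∈ Finset.univ, |(inner ℝ (φ ℓ) Y : ℝ)| / 2 - 3 / I ℓ ≤
        I ℓ * Real.exp (-(inner ℝ (φ ℓ) Y : ℝ)) + (inner ℝ (φ ℓ) Y : ℝ) :=
      fun ℓ _ => whittle_term_lb _ _ (hI ℓ)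
    have h2 : ∑ ℓ : Fin L, (|(inner ℝ (φ ℓ) Y : ℝ)| / 2 - 3 / I ℓ) ≤
        ∑ ℓ : Fin L, (I ℓ * Real.exp (-(inner ℝ (φ ℓ) Y : ℝ)) + (inner ℝ (φ ℓ) Y : ℝ)) :=
      by exact Finset.sum_le_sum h1
    have h3 : ‖T Y‖ ≤ ∑ ℓ : Fin L, |(inner ℝ (φ ℓ) Y : ℝ)| := by
      refine (pi_norm_le_iff_of_nonneg ?_).2 ?_
      · positivity
      · intro ℓ
        rw [hTapply, Real.norm_eq_abs]
        exact Finset.single_le_sum (f := fun i => |(inner ℝ (φ i) Y : ℝ)|)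
          (fun i _ => abs_nonneg _) (Finset.mem_univ ℓ)
    have h5 : ‖Y‖ ≤ C * (∑ ℓ : Fin L, |(inner ℝ (φ ℓ) Y : ℝ)|) :=
      le_trans (hbound Y) (mul_le_mul_of_nonneg_left h3 hC.le)
    have h6 : ‖Y‖ / (2 * C) ≤ (∑ ℓ : Fin L, |(inner ℝ (φ ℓ) Y : ℝ)|) / 2 := by
      rw [div_le_div_iff₀ (by positivity) (by norm_num)]
      nlinarith
    have h7 : ∑ ℓ : Fin L, (|(inner ℝ (φ ℓ) Y : ℝ)| / 2 - 3 / I ℓ) =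
        (∑ ℓ : Fin L, |(inner ℝ (φ ℓ) Y : ℝ)|) / 2 - D := by
      rw [Finset.sum_sub_distrib, ← Finset.sum_div, hDdef]
    rw [h7] at h2
    linarith
  have hlin : Tendsto (fun r : ℝ => r / (2 * C) - D) atTop atTop := by
    apply tendsto_atTop_add_const_right
    exact Tendsto.atTop_div_const (by positivity) tendsto_id
  -- coercivity w.r.t. the comap filter
  have coer1 : Filter.Tendsto F
      (Filter.comap (fun Y : EuclideanSpace ℝ (Fin K) => ‖Y‖) Filter.atTop) Filter.atTop := by
    apply tendsto_atTop_mono key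
    exact hlin.comp tendsto_comap
  -- coercivity w.r.t. the cocompact filter and existence of a minimizer
  have coer2 : Filter.Tendsto F (cocompact (EuclideanSpace ℝ (Fin K))) Filter.atTop := by
    apply tendsto_atTop_mono key
    exact hlin.comp tendsto_norm_cocompact_atTop
  have hFc : Continuous F := by
    have hFeq : F = fun Y => ∑ ℓ : Fin L,
        (I ℓ * Real.exp (-(inner ℝ (φ ℓ) Y : ℝ)) + (inner ℝ (φ ℓ) Y : ℝ)) := funext hF
    rw [hFeq]
    apply continuous_finset_sum
    intro ℓ _
    have hinner : Continuous fun Y : EuclideanSpace ℝ (Fin K) => (inner ℝ (φ ℓ) Y : ℝ) :=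
      Continuous.inner continuous_const continuous_id
    exact (continuous_const.mul (Real.continuous_exp.comp hinner.neg)).add hinner
  obtain ⟨Ystar, hmin⟩ := hFc.exists_forall_le coer2
  refine ⟨coer1, Ystar, hmin, ?_⟩
  -- uniqueness via strict convexity
  intro Z hZ
  by_contra hne
  have hTne : T Z ≠ T Ystar := fun h => hne (hTinj h)
  obtain ⟨ℓ₀, hℓ₀⟩ := Function.ne_iff.1 hTne
  set M : EuclideanSpace ℝ (Fin K) := (2:ℝ)⁻¹ • (Z + Ystar) with hMdef
  have hmid : ∀ ℓ, (inner ℝ (φ ℓ) M : ℝ) =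
      ((inner ℝ (φ ℓ) Z : ℝ) + (inner ℝ (φ ℓ) Ystar : ℝ)) / 2 := by
    intro ℓ
    rw [hMdef, inner_smul_right, inner_add_right]
    ring
  have hterm_le : ∀ ℓ : Fin L,
      I ℓ * Real.exp (-(inner ℝ (φ ℓ) M : ℝ)) + (inner ℝ (φ ℓ) M : ℝ) ≤
      ((I ℓ * Real.exp (-(inner ℝ (φ ℓ) Z : ℝ)) + (inner ℝ (φ ℓ) Z : ℝ)) +
       (I ℓ * Real.exp (-(inner ℝ (φ ℓ) Ystar : ℝ)) + (inner ℝ (φ ℓ) Ystar : ℝ))) / 2 := by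
    intro ℓ
    rw [hmid ℓ]
    have h1 : Real.exp (-(((inner ℝ (φ ℓ) Z : ℝ) + (inner ℝ (φ ℓ) Ystar : ℝ)) / 2)) ≤
        (Real.exp (-(inner ℝ (φ ℓ) Z : ℝ)) + Real.exp (-(inner ℝ (φ ℓ) Ystar : ℝ))) / 2 := by
      have := exp_midpoint_le (-(inner ℝ (φ ℓ) Z : ℝ)) (-(inner ℝ (φ ℓ) Ystar : ℝ))
      rw [show (-(inner ℝ (φ ℓ) Z : ℝ) + -(inner ℝ (φ ℓ) Ystar : ℝ)) / 2 =
        -(((inner ℝ (φ ℓ) Z : ℝ) + (inner ℝ (φ ℓ) Ystar : ℝ)) / 2) by ring] at this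
      exact this
    nlinarith [hI ℓ, (hI ℓ).le]
  have hterm_lt :
      I ℓ₀ * Real.exp (-(inner ℝ (φ ℓ₀) M : ℝ)) + (inner ℝ (φ ℓ₀) M : ℝ) <
      ((I ℓ₀ * Real.exp (-(inner ℝ (φ ℓ₀) Z : ℝ)) + (inner ℝ (φ ℓ₀) Z : ℝ)) +
       (I ℓ₀ * Real.exp (-(inner ℝ (φ ℓ₀) Ystar : ℝ)) + (inner ℝ (φ ℓ₀) Ystar : ℝ))) / 2 := by
    rw [hmid ℓ₀]
    have hne' : -(inner ℝ (φ ℓ₀) Z : ℝ) ≠ -(inner ℝ (φ ℓ₀) Ystar : ℝ) := by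
      simp only [hTapply] at hℓ₀
      exact fun h => hℓ₀ (by linarith [neg_injective h])
    have h1 := exp_midpoint_lt _ _ hne'
    rw [show (-(inner ℝ (φ ℓ₀) Z : ℝ) + -(inner ℝ (φ ℓ₀) Ystar : ℝ)) / 2 =
      -(((inner ℝ (φ ℓ₀) Z : ℝ) + (inner ℝ (φ ℓ₀) Ystar : ℝ)) / 2) by ring] at h1
    nlinarith [hI ℓ₀]
  have hsum : F M < (F Z + F Ystar) / 2 := by
    rw [hF M, hF Z, hF Ystar, ← Finset.sum_add_distrib, Finset.sum_div]
    exact Finset.sum_lt_sum (fun ℓ _ => hterm_le ℓ) ⟨ℓ₀, Finset.mem_univ _, hterm_lt⟩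
  have hZY : F Z = F Ystar := le_antisymm (hZ Ystar) (hmin Z)
  have := hZ M
  linarith
end

section
/- Let X be a real N×P matrix with XᵀX invertible and Y a real N×K matrix, and let B̂_ols = (XᵀX)^{−1}XᵀY. Let M = YᵀX(XᵀX)^{−1}XᵀY, a symmetric positive semidefinite K×K matrix, with orthonormal eigenvectors û_1, …, û_K ordered by non-increasing eigenvalues. Then for any integer 1 ≤ m ≤ min(P, K), the matrix B̂_rrr = B̂_ols · ( Σ_{j=1}^{m} û_j û_jᵀ ) minimizes the squared Frobenius norm ‖Y − X B‖² over all P×K real matrices B of rank at most m, i.e., over all B of the form B = C Dᵀ with C ∈ ℝ^{P×m} and D ∈ ℝ^{K×m}. -/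
open Matrix Finset


lemma frob_eq_trace {a b : ℕ} (A : Matrix (Fin a) (Fin b) ℝ) :
    ∑ i : Fin a, ∑ j : Fin b, (A i j)^2 = (Aᵀ * A).trace := by
  rw [Matrix.trace, Finset.sum_comm]
  simp [Matrix.diag, Matrix.mul_apply, pow_two]

lemma cross_eq_trace {a b : ℕ} (R S : Matrix (Fin a) (Fin b) ℝ) :
    ∑ i : Fin a, ∑ j : Fin b, R i j * S i j = (Rᵀ * S).trace := by
  rw [Matrix.trace, Finset.sum_comm]
  simp [Matrix.diag, Matrix.mul_apply]

lemma vecMulVec_mul_vecMulVec {n : ℕ} (a b c d : Fin n → ℝ) :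
    vecMulVec a b * vecMulVec c d = (b ⬝ᵥ c) • vecMulVec a d := by
  ext i j
  simp [Matrix.mul_apply, vecMulVec_apply, dotProduct, Finset.mul_sum, Finset.sum_mul]
  exact Finset.sum_congr rfl fun t _ => by ring

lemma mul_vecMulVec {n k : ℕ} (M : Matrix (Fin k) (Fin n) ℝ) (a : Fin n → ℝ) (b : Fin n → ℝ) :
    M * vecMulVec a b = vecMulVec (M *ᵥ a) b := by
  ext i j
  simp [Matrix.mul_apply, vecMulVec_apply, Matrix.mulVec, dotProduct, Finset.sum_mul]
  exact Finset.sum_congr rfl fun t _ => by ring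

lemma trace_vecMulVec {n : ℕ} (a b : Fin n → ℝ) : (vecMulVec a b).trace = a ⬝ᵥ b := by
  simp [Matrix.trace, Matrix.diag, vecMulVec_apply, dotProduct]

lemma card_filter_lt {K m : ℕ} (hmK : m ≤ K) :
    (Finset.univ.filter fun j : Fin K => (j : ℕ) < m).card = m := by
  have : (Finset.univ.filter fun j : Fin K => (j : ℕ) < m)
      = Finset.map (Fin.castLEEmb hmK) Finset.univ := by
    ext j
    simp only [Finset.mem_filter, Finset.mem_univ, true_and, Finset.mem_map]
    constructor
    · intro h; exact ⟨⟨(j : ℕ), h⟩, rfl⟩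
    · rintro ⟨i, -, rfl⟩; simp [Fin.castLEEmb]
  rw [this, Finset.card_map, Finset.card_univ, Fintype.card_fin]


lemma ky_fan {K m : ℕ} (hm : 1 ≤ m) (hmK : m ≤ K) (μ p : Fin K → ℝ)
    (hmono : ∀ i j : Fin K, i ≤ j → μ j ≤ μ i) (hμ0 : ∀ k, 0 ≤ μ k)
    (hp0 : ∀ k, 0 ≤ p k) (hp1 : ∀ k, p k ≤ 1)
    (hps : ∑ k, p k ≤ (m : ℝ))
    (hcard : (Finset.univ.filter fun j : Fin K => (j : ℕ) < m).card = m) :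
    ∑ k, μ k * p k ≤ ∑ k ∈ Finset.univ.filter (fun j : Fin K => (j : ℕ) < m), μ k := by
  set s := Finset.univ.filter (fun j : Fin K => (j : ℕ) < m) with hs
  have hmlt : m - 1 < K := by omega
  set c := μ ⟨m - 1, hmlt⟩ with hc
  have hc0 : 0 ≤ c := hμ0 _
  -- split sums
  have key : ∑ k, μ k * p k - ∑ k ∈ s, μ k ≤ c * (∑ k, p k) - c * m := by
    have h1 : ∑ k, μ k * p k = ∑ k ∈ s, μ k * p k + ∑ k ∈ sᶜ, μ k * p k := by
      rw [Finset.sum_add_sum_compl]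
    have h2 : ∑ k, p k = ∑ k ∈ s, p k + ∑ k ∈ sᶜ, p k := by
      rw [Finset.sum_add_sum_compl]
    have hA : ∑ k ∈ s, (μ k * p k - μ k) ≤ ∑ k ∈ s, (c * p k - c) := by
      apply Finset.sum_le_sum
      intro k hk
      have hkm : (k : ℕ) < m := by simpa [hs] using hk
      have hck : c ≤ μ k := hmono k ⟨m - 1, hmlt⟩ (by rw [Fin.le_def]; simp only []; omega)
      nlinarith [hp1 k, hp0 k]
    have hB : ∑ k ∈ sᶜ, μ k * p k ≤ ∑ k ∈ sᶜ, c * p k := by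
      apply Finset.sum_le_sum
      intro k hk
      have hkm : ¬ ((k : ℕ) < m) := by
        simp [hs, Finset.mem_compl] at hk; omega
      have hck : μ k ≤ c := hmono ⟨m - 1, hmlt⟩ k (by rw [Fin.le_def]; simp only []; omega)
      nlinarith [hp0 k]
    have hcm : ∑ k ∈ s, (c : ℝ) = c * m := by
      rw [Finset.sum_const, hcard]; push_cast; ring
    calc ∑ k, μ k * p k - ∑ k ∈ s, μ k
        = ∑ k ∈ s, (μ k * p k - μ k) + ∑ k ∈ sᶜ, μ k * p k := by
          rw [Finset.sum_sub_distrib]; linarith [h1]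
      _ ≤ ∑ k ∈ s, (c * p k - c) + ∑ k ∈ sᶜ, c * p k := by linarith [hA, hB]
      _ = c * (∑ k, p k) - c * m := by
          have h3 : ∑ i : Fin K, c * p i = ∑ k ∈ s, c * p k + ∑ k ∈ sᶜ, c * p k :=
            (Finset.sum_add_sum_compl s _).symm
          rw [Finset.sum_sub_distrib, hcm, Finset.mul_sum]
          linarith
  nlinarith [key, hps, hc0]

local notation "⟪" x ", " y "⟫" => @inner ℝ _ _ x y

lemma eckart_young_core {N K m : ℕ} (hm : 1 ≤ m) (hmK : m ≤ K)
    (μ : Fin K → ℝ) (hmono : ∀ i j : Fin K, i ≤ j → μ j ≤ μ i)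
    (a z : Fin K → EuclideanSpace ℝ (Fin N))
    (ha : ∀ k l : Fin K, ⟪a k, a l⟫ = if k = l then μ k else 0)
    (V : Submodule ℝ (EuclideanSpace ℝ (Fin N)))
    (hzV : ∀ k, z k ∈ V)
    (hdim : Module.finrank ℝ V ≤ m) :
    ∑ k, μ k - ∑ k ∈ Finset.univ.filter (fun j : Fin K => (j : ℕ) < m), μ k
      ≤ ∑ k, ‖a k - z k‖ ^ 2 := by
  classical
  have hμ : ∀ k, μ k = ‖a k‖ ^ 2 := by
    intro k
    have := ha k k
    simp only [if_true, eq_self_iff_true] at this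
    rw [← real_inner_self_eq_norm_sq, this]
  have hμ0 : ∀ k, 0 ≤ μ k := fun k => (hμ k) ▸ sq_nonneg _
  -- orthogonal projection
  set π : Fin K → EuclideanSpace ℝ (Fin N) :=
    fun k => (V.orthogonalProjectionOnto (a k) : EuclideanSpace ℝ (Fin N)) with hπ
  have hπV : ∀ k, π k ∈ V := fun k => (V.orthogonalProjectionOnto (a k)).2
  have hperp : ∀ k, ∀ w ∈ V, ⟪a k - π k, w⟫ = 0 := fun k w hw =>
    V.starProjection_inner_eq_zero (a k) w hw
  -- Pythagoras facts
  have hsplit : ∀ k, ‖a k‖ ^ 2 = ‖π k‖ ^ 2 + ‖a k - π k‖ ^ 2 := by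
    intro k
    have h0 : ⟪π k, a k - π k⟫ = 0 := by
      rw [real_inner_comm]; exact hperp k _ (hπV k)
    have := norm_add_sq_real (π k) (a k - π k)
    simp only [h0, mul_zero, add_zero] at this
    simpa using this
  have hmin : ∀ k, ‖a k - π k‖ ^ 2 ≤ ‖a k - z k‖ ^ 2 := by
    intro k
    have h0 : ⟪a k - π k, π k - z k⟫ = 0 :=
      hperp k _ (Submodule.sub_mem V (hπV k) (hzV k))
    have hsum : a k - z k = (a k - π k) + (π k - z k) := by abel
    have := norm_add_sq_real (a k - π k) (π k - z k)
    rw [← hsum] at this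
    nlinarith [sq_nonneg ‖π k - z k‖]
  have hq_le : ∀ k, ‖π k‖ ^ 2 ≤ μ k := by
    intro k
    have := hsplit k
    rw [← hμ k] at this
    nlinarith [sq_nonneg ‖a k - π k‖]
  -- orthonormal basis of V
  set r := Module.finrank ℝ V with hr
  set f : OrthonormalBasis (Fin r) ℝ V := stdOrthonormalBasis ℝ V with hf
  set c : Fin r → Fin K → ℝ := fun i k => ⟪(f i : EuclideanSpace ℝ (Fin N)), a k⟫ with hcdef
  have hq_eq : ∀ k, ‖π k‖ ^ 2 = ∑ i, (c i k) ^ 2 := by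
    intro k
    have h1 : ‖π k‖ ^ 2 = ‖V.orthogonalProjectionOnto (a k)‖ ^ 2 := by
      rw [hπ]; simp
    rw [h1]
    have h2 : ∀ i, f.repr (V.orthogonalProjectionOnto (a k)) i = c i k := by
      intro i
      rw [f.repr_apply_apply]
      rw [hcdef]
      simp only []
      rw [← Submodule.inner_orthogonalProjectionOnto_eq_of_mem_left]
    have h3 : ‖V.orthogonalProjectionOnto (a k)‖ ^ 2
        = ∑ i, ‖f.repr (V.orthogonalProjectionOnto (a k)) i‖ ^ 2 := by
      rw [← f.repr.norm_map (V.orthogonalProjectionOnto (a k))]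
      rw [EuclideanSpace.norm_eq]
      rw [Real.sq_sqrt (by positivity)]
    rw [h3]
    refine Finset.sum_congr rfl fun i _ => ?_
    rw [h2 i]
    simp [Real.norm_eq_abs, sq_abs]
  -- Bessel
  set e : {k : Fin K // μ k ≠ 0} → EuclideanSpace ℝ (Fin N) :=
    fun k => (Real.sqrt (μ k.1))⁻¹ • a k.1 with he
  have hon : Orthonormal ℝ e := by
    rw [orthonormal_iff_ite]
    intro k l
    rw [he]
    simp only [real_inner_smul_left, real_inner_smul_right]
    rw [ha k.1 l.1]
    by_cases hkl : k = l
    · subst hkl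
      have hpos : 0 < μ k.1 := lt_of_le_of_ne (hμ0 k.1) (Ne.symm k.2)
      simp only [eq_self_iff_true, if_true]
      have hs0 : Real.sqrt (μ k.1) ≠ 0 := by positivity
      field_simp
      exact (Real.sq_sqrt hpos.le).symm
    · have : (k.1 = l.1) = False := by
        simp only [eq_iff_iff, iff_false]
        intro h; exact hkl (Subtype.ext h)
      simp [this, hkl]
  have bessel : ∀ i : Fin r, ∑ k : {k : Fin K // μ k ≠ 0}, ⟪e k, (f i : EuclideanSpace ℝ (Fin N))⟫ ^ 2 ≤ 1 := by
    intro i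
    have := hon.sum_inner_products_le (s := Finset.univ) ((f i : EuclideanSpace ℝ (Fin N)))
    have hnf : ‖(f i : EuclideanSpace ℝ (Fin N))‖ = 1 := by
      have := f.orthonormal.1 i
      exact this
    simp only [Real.norm_eq_abs, sq_abs] at this
    rw [hnf] at this
    simpa using this
  -- define p
  set p : Fin K → ℝ := fun k => if μ k = 0 then 0 else ‖π k‖ ^ 2 / μ k with hpdef
  have hq_p : ∀ k, ‖π k‖ ^ 2 = μ k * p k := by
    intro k
    by_cases h : μ k = 0
    · have h1 : ‖π k‖ ^ 2 ≤ 0 := h ▸ hq_le k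
      have h2 : (0:ℝ) ≤ ‖π k‖ ^ 2 := sq_nonneg _
      have h3 : ‖π k‖ ^ 2 = 0 := le_antisymm h1 h2
      rw [h3, hpdef]
      simp [h]
    · rw [hpdef]; simp only [h, if_false]
      field_simp
  have hp0 : ∀ k, 0 ≤ p k := by
    intro k
    rw [hpdef]
    by_cases h : μ k = 0
    · simp [h]
    · simp only [h, if_false]
      have hpos : 0 < μ k := lt_of_le_of_ne (hμ0 k) (Ne.symm h)
      positivity
  have hp1 : ∀ k, p k ≤ 1 := by
    intro k
    rw [hpdef]
    by_cases h : μ k = 0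
    · simp [h]
    · simp only [h, if_false]
      have hpos : 0 < μ k := lt_of_le_of_ne (hμ0 k) (Ne.symm h)
      rw [div_le_one hpos]
      exact hq_le k
  -- sum of p bounded by m
  have hpsum : ∑ k, p k ≤ (m : ℝ) := by
    have h1 : ∑ k, p k = ∑ k ∈ Finset.univ.filter (fun k => μ k ≠ 0), p k := by
      symm
      apply Finset.sum_filter_of_ne
      intro k _ hpk
      intro h
      apply hpk
      rw [hpdef]; simp [h]
    have h2 : ∑ k ∈ Finset.univ.filter (fun k => μ k ≠ 0), p k
        = ∑ k : {k : Fin K // μ k ≠ 0}, p k.1 := by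
      apply Finset.sum_subtype
      intro x; simp
    have h3 : ∀ k : {k : Fin K // μ k ≠ 0},
        p k.1 = ∑ i : Fin r, ⟪e k, (f i : EuclideanSpace ℝ (Fin N))⟫ ^ 2 := by
      intro k
      have hpos : 0 < μ k.1 := lt_of_le_of_ne (hμ0 k.1) (Ne.symm k.2)
      have h4 : ∀ i : Fin r, ⟪e k, (f i : EuclideanSpace ℝ (Fin N))⟫ ^ 2
          = (c i k.1) ^ 2 / μ k.1 := by
        intro i
        rw [he]
        simp only [real_inner_smul_left]
        rw [real_inner_comm]
        rw [hcdef]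
        simp only []
        rw [div_eq_mul_inv, mul_pow, mul_comm, inv_pow]
        congr 1
        rw [Real.sq_sqrt hpos.le]
      rw [hpdef]
      simp only [k.2, if_false]
      rw [hq_eq k.1, Finset.sum_div]
      exact Finset.sum_congr rfl fun i _ => (h4 i).symm
    rw [h1, h2]
    calc ∑ k : {k : Fin K // μ k ≠ 0}, p k.1
        = ∑ k : {k : Fin K // μ k ≠ 0}, ∑ i : Fin r,
            ⟪e k, (f i : EuclideanSpace ℝ (Fin N))⟫ ^ 2 :=
          Finset.sum_congr rfl fun k _ => h3 k
      _ = ∑ i : Fin r, ∑ k : {k : Fin K // μ k ≠ 0},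
            ⟪e k, (f i : EuclideanSpace ℝ (Fin N))⟫ ^ 2 := Finset.sum_comm
      _ ≤ ∑ _i : Fin r, (1:ℝ) := Finset.sum_le_sum fun i _ => bessel i
      _ = (r : ℝ) := by simp
      _ ≤ (m : ℝ) := by exact_mod_cast hdim
  -- Ky Fan
  have hkf : ∑ k, μ k * p k
      ≤ ∑ k ∈ Finset.univ.filter (fun j : Fin K => (j : ℕ) < m), μ k :=
    ky_fan hm hmK μ p hmono hμ0 hp0 hp1 hpsum (card_filter_lt hmK)
  -- conclude
  have hlow : ∀ k, μ k - μ k * p k ≤ ‖a k - z k‖ ^ 2 := by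
    intro k
    have h1 := hmin k
    have h2 := hsplit k
    rw [← hμ k, hq_p k] at h2
    linarith
  calc ∑ k, μ k - ∑ k ∈ Finset.univ.filter (fun j : Fin K => (j : ℕ) < m), μ k
      ≤ ∑ k, μ k - ∑ k, μ k * p k := by linarith
    _ = ∑ k, (μ k - μ k * p k) := by rw [Finset.sum_sub_distrib]
    _ ≤ ∑ k, ‖a k - z k‖ ^ 2 := Finset.sum_le_sum fun k _ => hlow k

/-- Reduced-rank regression (Izenman): with `B̂_ols = (XᵀX)⁻¹XᵀY` and
`M = YᵀX(XᵀX)⁻¹XᵀY` with orthonormal eigenvectors `u_j` ordered by non-increasing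
eigenvalues, the matrix `B̂_rrr = B̂_ols (Σ_{j<m} u_j u_jᵀ)` minimizes the squared Frobenius
norm `‖Y - XB‖²` over all `P×K` matrices of rank at most `m`, i.e. all `B = C Dᵀ`. -/
theorem reduced_rank_regression (N P K m : ℕ)
    (hm : 1 ≤ m) (hmP : m ≤ P) (hmK : m ≤ K)
    (X : Matrix (Fin N) (Fin P) ℝ) (hX : IsUnit (Xᵀ * X))
    (Y : Matrix (Fin N) (Fin K) ℝ)
    (Bols : Matrix (Fin P) (Fin K) ℝ) (hBols : Bols = (Xᵀ * X)⁻¹ * Xᵀ * Y)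
    (M : Matrix (Fin K) (Fin K) ℝ) (hM : M = Yᵀ * X * (Xᵀ * X)⁻¹ * Xᵀ * Y)
    (u : Fin K → Fin K → ℝ) (μ : Fin K → ℝ)
    (hortho : ∀ i j : Fin K, u i ⬝ᵥ u j = if i = j then (1 : ℝ) else 0)
    (heig : ∀ j : Fin K, M.mulVec (u j) = μ j • u j)
    (hmono : ∀ i j : Fin K, i ≤ j → μ j ≤ μ i)
    (Brrr : Matrix (Fin P) (Fin K) ℝ)
    (hBrrr : Brrr = Bols *
      ∑ j ∈ Finset.univ.filter (fun j : Fin K => (j : ℕ) < m), Matrix.vecMulVec (u j) (u j)) :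
    ∀ (C : Matrix (Fin P) (Fin m) ℝ) (D : Matrix (Fin K) (Fin m) ℝ),
      ∑ i : Fin N, ∑ j : Fin K, ((Y - X * Brrr) i j) ^ 2 ≤
        ∑ i : Fin N, ∑ j : Fin K, ((Y - X * (C * Dᵀ)) i j) ^ 2 := by
  intro C D
  classical
  have hdet : IsUnit (Xᵀ * X).det := (Matrix.isUnit_iff_isUnit_det _).mp hX
  have hinv1 : (Xᵀ * X) * (Xᵀ * X)⁻¹ = 1 := Matrix.mul_nonsing_inv _ hdet
  have hinv2 : (Xᵀ * X)⁻¹ * (Xᵀ * X) = 1 := Matrix.nonsing_inv_mul _ hdet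
  set Q : Matrix (Fin N) (Fin N) ℝ := X * (Xᵀ * X)⁻¹ * Xᵀ with hQ
  have hinvT : ((Xᵀ * X)⁻¹)ᵀ = (Xᵀ * X)⁻¹ := by
    rw [Matrix.transpose_nonsing_inv, Matrix.transpose_mul, Matrix.transpose_transpose]
  have hQT : Qᵀ = Q := by
    rw [hQ, Matrix.transpose_mul, Matrix.transpose_mul, Matrix.transpose_transpose, hinvT,
      Matrix.mul_assoc]
  have hXtQ : Xᵀ * Q = Xᵀ := by
    rw [hQ]
    calc Xᵀ * (X * (Xᵀ * X)⁻¹ * Xᵀ) = ((Xᵀ * X) * (Xᵀ * X)⁻¹) * Xᵀ := by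
          rw [Matrix.mul_assoc, Matrix.mul_assoc, Matrix.mul_assoc]
      _ = Xᵀ := by rw [hinv1, Matrix.one_mul]
  have hQQ : Q * Q = Q := by
    calc Q * Q = X * (Xᵀ * X)⁻¹ * (Xᵀ * Q) := by rw [Matrix.mul_assoc]
      _ = Q := by rw [hXtQ]
  set Yh : Matrix (Fin N) (Fin K) ℝ := Q * Y with hYh
  have hXB : X * Bols = Yh := by
    rw [hBols, hYh, hQ]
    simp only [Matrix.mul_assoc]
  have hMY : Yhᵀ * Yh = M := by
    have h1 : Yhᵀ * Yh = Yᵀ * (Q * (Q * Y)) := by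
      rw [hYh, Matrix.transpose_mul, hQT, Matrix.mul_assoc]
    rw [h1, ← Matrix.mul_assoc Q Q Y, hQQ, hM, hQ]
    simp only [Matrix.mul_assoc]
  have hXtR : Xᵀ * (Y - Yh) = 0 := by
    rw [Matrix.mul_sub, hYh, ← Matrix.mul_assoc, hXtQ, sub_self]
  -- Pythagoras
  have pyth : ∀ B : Matrix (Fin P) (Fin K) ℝ,
      ∑ i : Fin N, ∑ j : Fin K, ((Y - X * B) i j) ^ 2 =
        (∑ i : Fin N, ∑ j : Fin K, ((Y - Yh) i j) ^ 2) +
        ∑ i : Fin N, ∑ j : Fin K, ((Yh - X * B) i j) ^ 2 := by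
    intro B
    have hdecomp : Y - X * B = (Y - Yh) + (Yh - X * B) := by abel
    have hfac : Yh - X * B = X * (Bols - B) := by
      rw [Matrix.mul_sub, hXB]
    have hcross : ∑ i : Fin N, ∑ j : Fin K, (Y - Yh) i j * (Yh - X * B) i j = 0 := by
      rw [cross_eq_trace, hfac, ← Matrix.mul_assoc]
      have h0 : (Y - Yh)ᵀ * X = 0 := by
        have := congrArg Matrix.transpose hXtR
        rwa [Matrix.transpose_mul, Matrix.transpose_transpose, Matrix.transpose_zero] at this
      rw [h0, Matrix.zero_mul, Matrix.trace_zero]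
    rw [hdecomp]
    have expand : ∀ i j, (((Y - Yh) + (Yh - X * B)) i j) ^ 2 =
        ((Y - Yh) i j) ^ 2 + (2 * ((Y - Yh) i j * (Yh - X * B) i j) + ((Yh - X * B) i j) ^ 2) := by
      intro i j; rw [Matrix.add_apply]; ring
    calc ∑ i : Fin N, ∑ j : Fin K, (((Y - Yh) + (Yh - X * B)) i j) ^ 2
        = ∑ i : Fin N, ∑ j : Fin K, (((Y - Yh) i j) ^ 2 +
            (2 * ((Y - Yh) i j * (Yh - X * B) i j) + ((Yh - X * B) i j) ^ 2)) :=
          Finset.sum_congr rfl fun i _ => Finset.sum_congr rfl fun j _ => expand i j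
      _ = (∑ i : Fin N, ∑ j : Fin K, ((Y - Yh) i j) ^ 2) +
            (2 * (∑ i : Fin N, ∑ j : Fin K, (Y - Yh) i j * (Yh - X * B) i j) +
             ∑ i : Fin N, ∑ j : Fin K, ((Yh - X * B) i j) ^ 2) := by
          simp only [Finset.sum_add_distrib, Finset.mul_sum]
      _ = _ := by rw [hcross]; ring
  -- orthonormal completeness
  set sm : Finset (Fin K) := Finset.univ.filter (fun j : Fin K => (j : ℕ) < m) with hsm
  have hUtU : ∑ k : Fin K, vecMulVec (u k) (u k) = (1 : Matrix (Fin K) (Fin K) ℝ) := by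
    set Um : Matrix (Fin K) (Fin K) ℝ := Matrix.of u with hUm
    have h1 : Um * Umᵀ = 1 := by
      ext i j
      rw [Matrix.mul_apply, Matrix.one_apply]
      have := hortho i j
      rw [dotProduct] at this
      simpa [hUm] using this
    have h2 : Umᵀ * Um = 1 := mul_eq_one_comm.mp h1
    ext i j
    have h3 := congrFun (congrFun h2 i) j
    rw [Matrix.mul_apply] at h3
    rw [Matrix.sum_apply, ← h3]
    refine Finset.sum_congr rfl fun k _ => ?_
    simp [vecMulVec_apply, hUm, mul_comm]
  have htrMP : ∀ s : Finset (Fin K),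
      (M * ∑ j ∈ s, vecMulVec (u j) (u j)).trace = ∑ j ∈ s, μ j := by
    intro s
    rw [Finset.mul_sum, Matrix.trace_sum]
    refine Finset.sum_congr rfl fun j _ => ?_
    rw [_root_.mul_vecMulVec, heig j, trace_vecMulVec, smul_dotProduct, hortho j j]
    simp
  have htrM : M.trace = ∑ k : Fin K, μ k := by
    have := htrMP Finset.univ
    rwa [hUtU, Matrix.mul_one] at this
  -- Pm facts
  set Pm : Matrix (Fin K) (Fin K) ℝ := ∑ j ∈ sm, vecMulVec (u j) (u j) with hPm
  have hPmT : Pmᵀ = Pm := by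
    rw [hPm, Matrix.transpose_sum]
    refine Finset.sum_congr rfl fun j _ => ?_
    ext i l
    simp [Matrix.transpose_apply, vecMulVec_apply, mul_comm]
  have hPP : Pm * Pm = Pm := by
    rw [hPm, Finset.sum_mul]
    refine Finset.sum_congr rfl fun j hj => ?_
    rw [Finset.mul_sum]
    have : ∀ k ∈ sm, vecMulVec (u j) (u j) * vecMulVec (u k) (u k)
        = if j = k then vecMulVec (u j) (u k) else 0 := by
      intro k _
      rw [_root_.vecMulVec_mul_vecMulVec, hortho j k]
      by_cases h : j = k <;> simp [h]
    rw [Finset.sum_congr rfl this, Finset.sum_ite_eq sm j (fun k => vecMulVec (u j) (u k)),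
      if_pos hj]
  have h1P : ((1 : Matrix (Fin K) (Fin K) ℝ) - Pm) * (1 - Pm) = 1 - Pm := by
    calc ((1 : Matrix (Fin K) (Fin K) ℝ) - Pm) * (1 - Pm)
        = 1 - Pm - Pm + Pm * Pm := by noncomm_ring
      _ = 1 - Pm := by rw [hPP]; abel
  -- value at Brrr
  have hXBrrr : X * Brrr = Yh * Pm := by
    rw [hBrrr, ← Matrix.mul_assoc, hXB, hPm, hsm]
  have hGrrr : ∑ i : Fin N, ∑ j : Fin K, ((Yh - X * Brrr) i j) ^ 2
      = (∑ k : Fin K, μ k) - ∑ j ∈ sm, μ j := by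
    have hfac : Yh - X * Brrr = Yh * (1 - Pm) := by
      rw [hXBrrr, Matrix.mul_sub, Matrix.mul_one]
    rw [hfac, frob_eq_trace]
    have h2 : (Yh * (1 - Pm))ᵀ * (Yh * (1 - Pm)) = (1 - Pm) * (M * (1 - Pm)) := by
      rw [Matrix.transpose_mul]
      have : (1 - Pm : Matrix (Fin K) (Fin K) ℝ)ᵀ = 1 - Pm := by
        rw [Matrix.transpose_sub, Matrix.transpose_one, hPmT]
      rw [this, Matrix.mul_assoc, ← Matrix.mul_assoc Yhᵀ Yh (1 - Pm), hMY]
    rw [h2, Matrix.trace_mul_comm, Matrix.mul_assoc, h1P, Matrix.mul_sub, Matrix.mul_one,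
      Matrix.trace_sub, htrM, htrMP sm]
  -- Eckart-Young side
  set ve : (Fin N → ℝ) ≃ₗ[ℝ] EuclideanSpace ℝ (Fin N) :=
    (WithLp.linearEquiv 2 ℝ (Fin N → ℝ)).symm with hve
  have hve_apply : ∀ (w : Fin N → ℝ) (i : Fin N), (ve w) i = w i := by
    intro w i
    rfl
  have hnorm : ∀ w : Fin N → ℝ, ‖ve w‖ ^ 2 = ∑ i : Fin N, (w i) ^ 2 := by
    intro w
    rw [EuclideanSpace.norm_eq, Real.sq_sqrt (by positivity)]
    refine Finset.sum_congr rfl fun i _ => ?_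
    rw [hve_apply, Real.norm_eq_abs, sq_abs]
  have hinner : ∀ w v : Fin N → ℝ, @inner ℝ _ _ (ve w) (ve v) = w ⬝ᵥ v := by
    intro w v
    rw [PiLp.inner_apply, dotProduct]
    refine Finset.sum_congr rfl fun i _ => ?_
    rw [hve_apply, hve_apply]
    simp [RCLike.inner_apply, conj_trivial]
    ring
  have hdot : ∀ (A0 : Matrix (Fin N) (Fin K) ℝ) (x y : Fin K → ℝ),
      (A0 *ᵥ x) ⬝ᵥ (A0 *ᵥ y) = x ⬝ᵥ ((A0ᵀ * A0) *ᵥ y) := by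
    intro A0 x y
    rw [← Matrix.mulVec_mulVec, Matrix.dotProduct_mulVec x, Matrix.vecMul_transpose]
  set a : Fin K → EuclideanSpace ℝ (Fin N) := fun k => ve (Yh *ᵥ u k) with hadef
  set z : Fin K → EuclideanSpace ℝ (Fin N) :=
    fun k => ve ((X * C) *ᵥ ((Dᵀ) *ᵥ u k)) with hzdef
  have ha : ∀ k l : Fin K, @inner ℝ _ _ (a k) (a l) = if k = l then μ k else 0 := by
    intro k l
    rw [hadef]
    simp only []
    rw [hinner, hdot, hMY, heig l, dotProduct_smul, hortho k l]
    by_cases h : k = l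
    · subst h; simp
    · simp [h]
  set A : Matrix (Fin N) (Fin K) ℝ := Yh - X * (C * Dᵀ) with hA
  have hAk : ∀ k : Fin K, A *ᵥ u k = (Yh *ᵥ u k) - ((X * C) *ᵥ ((Dᵀ) *ᵥ u k)) := by
    intro k
    rw [hA, Matrix.sub_mulVec, ← Matrix.mul_assoc, Matrix.mulVec_mulVec]
  -- rotation identity
  set Um : Matrix (Fin K) (Fin K) ℝ := Matrix.of u with hUm
  have hUm1 : Um * Umᵀ = 1 := by
    ext i j
    rw [Matrix.mul_apply, Matrix.one_apply]
    have := hortho i j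
    rw [dotProduct] at this
    simpa [hUm] using this
  have hUm2 : Umᵀ * Um = 1 := mul_eq_one_comm.mp hUm1
  have hrot : ∑ k : Fin K, ∑ i : Fin N, ((A *ᵥ u k) i) ^ 2
      = ∑ i : Fin N, ∑ j : Fin K, (A i j) ^ 2 := by
    have hB0 : ∀ (i : Fin N) (k : Fin K), (A * Umᵀ) i k = (A *ᵥ u k) i := by
      intro i k
      rw [Matrix.mul_apply, Matrix.mulVec, dotProduct]
      refine Finset.sum_congr rfl fun j _ => ?_
      simp [hUm]
    calc ∑ k : Fin K, ∑ i : Fin N, ((A *ᵥ u k) i) ^ 2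
        = ∑ i : Fin N, ∑ k : Fin K, ((A * Umᵀ) i k) ^ 2 := by
          rw [Finset.sum_comm]
          exact Finset.sum_congr rfl fun i _ => Finset.sum_congr rfl fun k _ => by rw [hB0]
      _ = ((A * Umᵀ)ᵀ * (A * Umᵀ)).trace := frob_eq_trace _
      _ = (Aᵀ * A).trace := by
          rw [Matrix.transpose_mul, Matrix.transpose_transpose, Matrix.trace_mul_comm,
            Matrix.mul_assoc, ← Matrix.mul_assoc Umᵀ Um Aᵀ, hUm2, Matrix.one_mul,
            Matrix.trace_mul_comm]
      _ = ∑ i : Fin N, ∑ j : Fin K, (A i j) ^ 2 := (frob_eq_trace A).symm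
  have hfrobA : ∑ k : Fin K, ‖a k - z k‖ ^ 2 = ∑ i : Fin N, ∑ j : Fin K, (A i j) ^ 2 := by
    rw [← hrot]
    refine Finset.sum_congr rfl fun k _ => ?_
    have h1 : a k - z k = ve (A *ᵥ u k) := by
      rw [hadef, hzdef]
      simp only []
      rw [hAk k, map_sub]
    rw [h1, hnorm]
  -- the subspace
  set colC : Fin m → EuclideanSpace ℝ (Fin N) := fun i => ve (fun n => (X * C) n i) with hcolC
  set V : Submodule ℝ (EuclideanSpace ℝ (Fin N)) := Submodule.span ℝ (Set.range colC) with hV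
  have hzV : ∀ k, z k ∈ V := by
    intro k
    have hcomb : (X * C) *ᵥ ((Dᵀ) *ᵥ u k) = ∑ i : Fin m, ((Dᵀ) *ᵥ u k) i • (fun n => (X * C) n i) := by
      ext n
      rw [Matrix.mulVec, dotProduct, Finset.sum_apply]
      refine Finset.sum_congr rfl fun i _ => ?_
      simp [mul_comm]
    rw [hzdef]
    simp only []
    rw [hcomb, map_sum]
    apply Submodule.sum_mem
    intro i _
    rw [LinearEquiv.map_smul]
    exact Submodule.smul_mem _ _ (Submodule.subset_span (Set.mem_range_self i))
  have hdim : Module.finrank ℝ V ≤ m := by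
    have := finrank_range_le_card (R := ℝ) colC
    rw [Set.finrank] at this
    simpa using this
  have hEY := eckart_young_core hm hmK μ hmono a z ha V hzV hdim
  rw [hfrobA] at hEY
  -- conclude
  rw [pyth Brrr, pyth (C * Dᵀ)]
  have hG : ∑ i : Fin N, ∑ j : Fin K, ((Yh - X * (C * Dᵀ)) i j) ^ 2
      = ∑ i : Fin N, ∑ j : Fin K, (A i j) ^ 2 := by rw [hA]
  rw [hGrrr, hG]
  have := hEY
  linarith
end
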